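/- Let a ≤ 0, n ≥ 1, and f, g : [0,∞) → ℝ bounded measurable. Define H^{(2)}_{g,f}(t) = a²∫₀ᵗ∫₀^{t−z} e^{ay} g(y+z) (∫₀^y e^{av} f(v+z) dv) dy dz. Then sup_{0≤t≤n} |H^{(2)}_{g,f}(t)| ≤ 2·ϖ*_{f,g}, where ϖ*_{f,g} is the two-sided correlation measure max over both orderings of max_{0≤v≤n, 0≤t≤n−v} |∫₀ᵗ f(u+v)g(u) du|. -/

import Mathlib

open MeasureTheory Real


private lemma bdd_intervalIntegrable {F : ℝ → ℝ} (hF : Measurable F) {C : ℝ}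
    (hC : ∀ x, |F x| ≤ C) (a b : ℝ) : IntervalIntegrable F volume a b := by
  rw [intervalIntegrable_iff]
  exact Measure.integrableOn_of_bounded measure_Ioc_lt_top.ne hF.aestronglyMeasurable
    (ae_of_all _ fun x => by simpa [Real.norm_eq_abs] using hC x)

private lemma swap_indicator {G : ℝ × ℝ → ℝ} (hG : Measurable G) {S : Set (ℝ × ℝ)}
    (hS : MeasurableSet S) (hfin : volume S ≠ ⊤) {C : ℝ} (hC : ∀ p ∈ S, |G p| ≤ C) :
    ∫ z : ℝ, ∫ y : ℝ, S.indicator G (z, y) = ∫ y : ℝ, ∫ z : ℝ, S.indicator G (z, y) := by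
  refine integral_integral_swap ?_
  have h1 : IntegrableOn G S := by
    refine Measure.integrableOn_of_bounded ?_ hG.aestronglyMeasurable
      ((ae_restrict_iff' hS).2 (ae_of_all _ fun p hp => by simpa [Real.norm_eq_abs] using hC p hp))
    exact hfin
  have h2 : Function.uncurry (fun z y : ℝ => S.indicator G (z, y)) = S.indicator G := by
    funext p; simp [Function.uncurry]
  rw [h2, ← Measure.volume_eq_prod]
  exact h1.integrable_indicator hS

private lemma tri_repr (t : ℝ) (ht : 0 ≤ t) (F : ℝ → ℝ → ℝ) :
    ∫ z in (0:ℝ)..t, ∫ y in (0:ℝ)..(t - z), F z y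
      = ∫ z : ℝ, ∫ y : ℝ, Set.indicator {p : ℝ × ℝ | 0 < p.1 ∧ 0 < p.2 ∧ p.1 + p.2 ≤ t}
          (fun p => F p.1 p.2) (z, y) := by
  have hφ : ∀ z : ℝ, (∫ y : ℝ, Set.indicator {p : ℝ × ℝ | 0 < p.1 ∧ 0 < p.2 ∧ p.1 + p.2 ≤ t}
      (fun p => F p.1 p.2) (z, y))
      = Set.indicator (Set.Ioc 0 t) (fun z => ∫ y in (0:ℝ)..(t - z), F z y) z := by
    intro z
    by_cases hz : z ∈ Set.Ioc (0:ℝ) t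
    · rw [Set.indicator_of_mem hz]
      have hyeq : ∀ y : ℝ, Set.indicator {p : ℝ × ℝ | 0 < p.1 ∧ 0 < p.2 ∧ p.1 + p.2 ≤ t}
          (fun p => F p.1 p.2) (z, y) = Set.indicator (Set.Ioc 0 (t - z)) (fun y => F z y) y := by
        intro y
        by_cases hy : y ∈ Set.Ioc (0:ℝ) (t - z)
        · rw [Set.indicator_of_mem hy, Set.indicator_of_mem]
          exact ⟨hz.1, hy.1, by have := hy.2; simp only [Set.mem_Ioc] at hy; linarith [hy.2]⟩
        · rw [Set.indicator_of_notMem hy, Set.indicator_of_notMem]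
          intro hmem
          rcases hmem with ⟨h1, h2, h3⟩
          exact hy ⟨h2, by linarith⟩
      simp_rw [hyeq]
      rw [integral_indicator measurableSet_Ioc,
        ← intervalIntegral.integral_of_le (by linarith [hz.2] : (0:ℝ) ≤ t - z)]
    · rw [Set.indicator_of_notMem hz]
      have hz0 : ∀ y : ℝ, Set.indicator {p : ℝ × ℝ | 0 < p.1 ∧ 0 < p.2 ∧ p.1 + p.2 ≤ t}
          (fun p => F p.1 p.2) (z, y) = 0 := by
        intro y
        apply Set.indicator_of_notMem
        intro hmem
        rcases hmem with ⟨h1, h2, h3⟩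
        exact hz ⟨h1, by linarith⟩
      simp [hz0]
  simp_rw [hφ]
  rw [integral_indicator measurableSet_Ioc, intervalIntegral.integral_of_le ht]

private lemma rect_repr (p q : ℝ) (hp : 0 ≤ p) (hq : 0 ≤ q) (F : ℝ → ℝ → ℝ) :
    ∫ z in (0:ℝ)..p, ∫ y in (0:ℝ)..q, F z y
      = ∫ z : ℝ, ∫ y : ℝ, Set.indicator {x : ℝ × ℝ | (0 < x.1 ∧ x.1 ≤ p) ∧ (0 < x.2 ∧ x.2 ≤ q)}
          (fun x => F x.1 x.2) (z, y) := by
  have hφ : ∀ z : ℝ, (∫ y : ℝ, Set.indicator {x : ℝ × ℝ | (0 < x.1 ∧ x.1 ≤ p) ∧ (0 < x.2 ∧ x.2 ≤ q)}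
      (fun x => F x.1 x.2) (z, y))
      = Set.indicator (Set.Ioc 0 p) (fun z => ∫ y in (0:ℝ)..q, F z y) z := by
    intro z
    by_cases hz : z ∈ Set.Ioc (0:ℝ) p
    · rw [Set.indicator_of_mem hz]
      have hyeq : ∀ y : ℝ, Set.indicator {x : ℝ × ℝ | (0 < x.1 ∧ x.1 ≤ p) ∧ (0 < x.2 ∧ x.2 ≤ q)}
          (fun x => F x.1 x.2) (z, y) = Set.indicator (Set.Ioc 0 q) (fun y => F z y) y := by
        intro y
        by_cases hy : y ∈ Set.Ioc (0:ℝ) q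
        · rw [Set.indicator_of_mem hy, Set.indicator_of_mem]
          exact ⟨⟨hz.1, hz.2⟩, hy.1, hy.2⟩
        · rw [Set.indicator_of_notMem hy, Set.indicator_of_notMem]
          intro hmem
          exact hy ⟨hmem.2.1, hmem.2.2⟩
      simp_rw [hyeq]
      rw [integral_indicator measurableSet_Ioc, ← intervalIntegral.integral_of_le hq]
    · rw [Set.indicator_of_notMem hz]
      have hz0 : ∀ y : ℝ, Set.indicator {x : ℝ × ℝ | (0 < x.1 ∧ x.1 ≤ p) ∧ (0 < x.2 ∧ x.2 ≤ q)}
          (fun x => F x.1 x.2) (z, y) = 0 := by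
        intro y
        apply Set.indicator_of_notMem
        intro hmem
        exact hz ⟨hmem.1.1, hmem.1.2⟩
      simp [hz0]
  simp_rw [hφ]
  rw [integral_indicator measurableSet_Ioc, intervalIntegral.integral_of_le hp]
private lemma tri_swap (t : ℝ) (ht : 0 ≤ t) (F : ℝ → ℝ → ℝ)
    (hF : Measurable fun p : ℝ × ℝ => F p.1 p.2) (C : ℝ)
    (hC : ∀ z y : ℝ, 0 < z → 0 < y → z + y ≤ t → |F z y| ≤ C) :
    ∫ z in (0:ℝ)..t, ∫ y in (0:ℝ)..(t - z), F z y
      = ∫ y in (0:ℝ)..t, ∫ z in (0:ℝ)..(t - y), F z y := by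
  have hSmeas : MeasurableSet {p : ℝ × ℝ | 0 < p.1 ∧ 0 < p.2 ∧ p.1 + p.2 ≤ t} := by
    refine (measurableSet_lt measurable_const measurable_fst).inter ?_
    exact (measurableSet_lt measurable_const measurable_snd).inter
      (measurableSet_le (measurable_fst.add measurable_snd) measurable_const)
  have hsub : {p : ℝ × ℝ | 0 < p.1 ∧ 0 < p.2 ∧ p.1 + p.2 ≤ t} ⊆
      Set.Icc (0:ℝ) t ×ˢ Set.Icc (0:ℝ) t := by
    rintro ⟨x, y⟩ ⟨h1, h2, h3⟩
    exact ⟨⟨h1.le, by linarith⟩, ⟨h2.le, by linarith⟩⟩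
  have hfin : volume {p : ℝ × ℝ | 0 < p.1 ∧ 0 < p.2 ∧ p.1 + p.2 ≤ t} ≠ ⊤ := by
    refine ((measure_mono hsub).trans_lt ?_).ne
    rw [Measure.volume_eq_prod, Measure.prod_prod]
    exact ENNReal.mul_lt_top measure_Icc_lt_top measure_Icc_lt_top
  have h2 := tri_repr t ht (fun y z => F z y)
  rw [tri_repr t ht F, h2]
  have hpt : ∀ y z : ℝ, Set.indicator {p : ℝ × ℝ | 0 < p.1 ∧ 0 < p.2 ∧ p.1 + p.2 ≤ t}
      (fun p => F p.2 p.1) (y, z)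
      = Set.indicator {p : ℝ × ℝ | 0 < p.1 ∧ 0 < p.2 ∧ p.1 + p.2 ≤ t}
      (fun p => F p.1 p.2) (z, y) := by
    intro y z
    simp only [Set.indicator_apply, Set.mem_setOf_eq]
    refine if_congr ?_ rfl rfl
    constructor
    · rintro ⟨h1, h2, h3⟩; exact ⟨h2, h1, by linarith⟩
    · rintro ⟨h1, h2, h3⟩; exact ⟨h2, h1, by linarith⟩
  simp_rw [hpt]
  exact swap_indicator hF hSmeas hfin (fun p hp => hC p.1 p.2 hp.1 hp.2.1 hp.2.2)

private lemma rect_swap (p q : ℝ) (hp : 0 ≤ p) (hq : 0 ≤ q) (F : ℝ → ℝ → ℝ)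
    (hF : Measurable fun x : ℝ × ℝ => F x.1 x.2) (C : ℝ)
    (hC : ∀ z y : ℝ, 0 < z → z ≤ p → 0 < y → y ≤ q → |F z y| ≤ C) :
    ∫ z in (0:ℝ)..p, ∫ y in (0:ℝ)..q, F z y = ∫ y in (0:ℝ)..q, ∫ z in (0:ℝ)..p, F z y := by
  have hSmeas : MeasurableSet {x : ℝ × ℝ | (0 < x.1 ∧ x.1 ≤ p) ∧ (0 < x.2 ∧ x.2 ≤ q)} := by
    refine ((measurableSet_lt measurable_const measurable_fst).inter
      (measurableSet_le measurable_fst measurable_const)).inter ?_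
    exact (measurableSet_lt measurable_const measurable_snd).inter
      (measurableSet_le measurable_snd measurable_const)
  have hsub : {x : ℝ × ℝ | (0 < x.1 ∧ x.1 ≤ p) ∧ (0 < x.2 ∧ x.2 ≤ q)} ⊆
      Set.Icc (0:ℝ) p ×ˢ Set.Icc (0:ℝ) q := by
    rintro ⟨x, y⟩ ⟨⟨h1, h2⟩, h3, h4⟩
    exact ⟨⟨h1.le, h2⟩, ⟨h3.le, h4⟩⟩
  have hfin : volume {x : ℝ × ℝ | (0 < x.1 ∧ x.1 ≤ p) ∧ (0 < x.2 ∧ x.2 ≤ q)} ≠ ⊤ := by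
    refine ((measure_mono hsub).trans_lt ?_).ne
    rw [Measure.volume_eq_prod, Measure.prod_prod]
    exact ENNReal.mul_lt_top measure_Icc_lt_top measure_Icc_lt_top
  have h2 := rect_repr q p hq hp (fun y z => F z y)
  rw [rect_repr p q hp hq F, h2]
  have hpt : ∀ y z : ℝ, Set.indicator {x : ℝ × ℝ | (0 < x.1 ∧ x.1 ≤ q) ∧ (0 < x.2 ∧ x.2 ≤ p)}
      (fun x => F x.2 x.1) (y, z)
      = Set.indicator {x : ℝ × ℝ | (0 < x.1 ∧ x.1 ≤ p) ∧ (0 < x.2 ∧ x.2 ≤ q)}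
      (fun x => F x.1 x.2) (z, y) := by
    intro y z
    simp only [Set.indicator_apply, Set.mem_setOf_eq]
    refine if_congr ?_ rfl rfl
    constructor
    · rintro ⟨⟨h1, h2⟩, h3, h4⟩; exact ⟨⟨h3, h4⟩, h1, h2⟩
    · rintro ⟨⟨h1, h2⟩, h3, h4⟩; exact ⟨⟨h3, h4⟩, h1, h2⟩
  simp_rw [hpt]
  exact swap_indicator hF hSmeas hfin (fun x hx => hC x.1 x.2 hx.1.1 hx.1.2 hx.2.1 hx.2.2)
private lemma exp_le_one_of {a x : ℝ} (ha : a ≤ 0) (hx : 0 ≤ x) : Real.exp (a * x) ≤ 1 := by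
  calc Real.exp (a * x) ≤ Real.exp 0 :=
        Real.exp_le_exp.mpr (mul_nonpos_of_nonpos_of_nonneg ha hx)
    _ = 1 := Real.exp_zero

private noncomputable def Vaux (a : ℝ) (f : ℝ → ℝ) (z y : ℝ) : ℝ :=
  ∫ v : ℝ, Set.indicator (Set.Ioc 0 y) (fun v => Real.exp (a * v) * f (v + z)) v

private lemma Vaux_eq (a : ℝ) (f : ℝ → ℝ) (z y : ℝ) (hy : 0 ≤ y) :
    (∫ v in (0:ℝ)..y, Real.exp (a * v) * f (v + z)) = Vaux a f z y := by
  unfold Vaux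
  rw [intervalIntegral.integral_of_le hy, ← integral_indicator measurableSet_Ioc]

private lemma Vaux_meas (a : ℝ) {f : ℝ → ℝ} (hf : Measurable f) :
    Measurable fun p : ℝ × ℝ => Vaux a f p.1 p.2 := by
  have h1 : StronglyMeasurable fun q : (ℝ × ℝ) × ℝ =>
      Set.indicator {q : (ℝ × ℝ) × ℝ | 0 < q.2 ∧ q.2 ≤ q.1.2}
        (fun q => Real.exp (a * q.2) * f (q.2 + q.1.1)) q := by
    refine Measurable.stronglyMeasurable ?_
    refine Measurable.indicator ?_ ?_
    · exact ((measurable_const.mul measurable_snd).exp).mul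
        (hf.comp (measurable_snd.add (measurable_fst.comp measurable_fst)))
    · exact (measurableSet_lt measurable_const measurable_snd).inter
        (measurableSet_le measurable_snd (measurable_snd.comp measurable_fst))
  have h2 := h1.integral_prod_right' (ν := volume)
  have h3 : (fun p : ℝ × ℝ => Vaux a f p.1 p.2) = fun p : ℝ × ℝ =>
      ∫ v : ℝ, Set.indicator {q : (ℝ × ℝ) × ℝ | 0 < q.2 ∧ q.2 ≤ q.1.2}
        (fun q => Real.exp (a * q.2) * f (q.2 + q.1.1)) (p, v) := by
    funext p
    unfold Vaux
    simp [Set.indicator_apply, Set.mem_Ioc, Set.mem_setOf_eq]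
  rw [h3]
  exact h2.measurable

private lemma Vaux_bd {a : ℝ} (ha : a ≤ 0) {f : ℝ → ℝ} {Cf : ℝ} (hCf : ∀ x, |f x| ≤ Cf)
    (z y : ℝ) (hy : 0 ≤ y) : |Vaux a f z y| ≤ Cf * y := by
  rw [← Vaux_eq a f z y hy]
  have h := intervalIntegral.norm_integral_le_of_norm_le_const (C := Cf)
    (f := fun v => Real.exp (a * v) * f (v + z)) (a := 0) (b := y) ?_
  · simpa [Real.norm_eq_abs, abs_of_nonneg hy] using h
  · intro x hx
    rw [Set.uIoc_of_le hy] at hx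
    rw [Real.norm_eq_abs, abs_mul, abs_of_pos (Real.exp_pos _)]
    calc Real.exp (a * x) * |f (x + z)| ≤ 1 * Cf :=
          mul_le_mul (exp_le_one_of ha hx.1.le) (hCf _) (abs_nonneg _) zero_le_one
      _ = Cf := one_mul _

/-- H^{(2)}_{g,f}(t) = a² ∫₀ᵗ ∫₀^{t−z} e^{ay} g(y+z) (∫₀^y e^{av} f(v+z) dv) dy dz
is bounded by 2 ϖ*_{f,g}; `W` is an upper bound on both shifted-correlation
families defining ϖ*_{f,g}. -/
theorem H2_bound (a : ℝ) (ha : a ≤ 0) (n : ℝ) (hn : 1 ≤ n)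
    (f g : ℝ → ℝ) (hf : Measurable f) (hg : Measurable g)
    (hfb : ∃ C, ∀ x, |f x| ≤ C) (hgb : ∃ C, ∀ x, |g x| ≤ C)
    (W : ℝ)
    (hW1 : ∀ v ∈ Set.Icc (0:ℝ) n, ∀ t ∈ Set.Icc (0:ℝ) (n - v),
      |∫ u in (0:ℝ)..t, f (u + v) * g u| ≤ W)
    (hW2 : ∀ v ∈ Set.Icc (0:ℝ) n, ∀ t ∈ Set.Icc (0:ℝ) (n - v),
      |∫ u in (0:ℝ)..t, g (u + v) * f u| ≤ W) :
    ∀ t ∈ Set.Icc (0:ℝ) n,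
      |a ^ 2 * ∫ z in (0:ℝ)..t, ∫ y in (0:ℝ)..(t - z),
          Real.exp (a * y) * g (y + z) *
            ∫ v in (0:ℝ)..y, Real.exp (a * v) * f (v + z)| ≤ 2 * W := by
  obtain ⟨Cf, hCf⟩ := hfb
  obtain ⟨Cg, hCg⟩ := hgb
  have hCf0 : 0 ≤ Cf := le_trans (abs_nonneg _) (hCf 0)
  have hCg0 : 0 ≤ Cg := le_trans (abs_nonneg _) (hCg 0)
  have hn0 : (0:ℝ) ≤ n := by linarith
  have hW0 : 0 ≤ W := by
    have := hW1 0 ⟨le_rfl, hn0⟩ 0 ⟨le_rfl, by simpa using hn0⟩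
    simpa using this
  intro t htmem
  obtain ⟨ht0, htn⟩ := htmem
  by_cases ha0 : a = 0
  · rw [ha0]
    simp only [ne_eq, OfNat.ofNat_ne_zero, not_false_eq_true, zero_pow, zero_mul, abs_zero]
    linarith
  have ha' : a < 0 := lt_of_le_of_ne ha ha0
  -- Step E0 : replace the inner integral by Vaux
  have E0 : (∫ z in (0:ℝ)..t, ∫ y in (0:ℝ)..(t - z),
        Real.exp (a * y) * g (y + z) * ∫ v in (0:ℝ)..y, Real.exp (a * v) * f (v + z))
      = ∫ z in (0:ℝ)..t, ∫ y in (0:ℝ)..(t - z),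
          Real.exp (a * y) * g (y + z) * Vaux a f z y := by
    rw [intervalIntegral.integral_of_le ht0, intervalIntegral.integral_of_le ht0]
    refine setIntegral_congr_fun measurableSet_Ioc (fun z hz => ?_)
    simp only [Set.mem_Ioc] at hz
    have htz : (0:ℝ) ≤ t - z := by linarith [hz.2]
    rw [intervalIntegral.integral_of_le htz, intervalIntegral.integral_of_le htz]
    refine setIntegral_congr_fun measurableSet_Ioc (fun y hy => ?_)
    simp only [Set.mem_Ioc] at hy
    rw [Vaux_eq a f z y hy.1.le]
  -- Step E1 : triangular Fubini
  have hF1meas : Measurable fun pr : ℝ × ℝ =>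
      Real.exp (a * pr.2) * g (pr.2 + pr.1) * Vaux a f pr.1 pr.2 :=
    (((measurable_const.mul measurable_snd).exp).mul
      (hg.comp (measurable_snd.add measurable_fst))).mul (Vaux_meas a hf)
  have hF1bd : ∀ z y : ℝ, 0 < z → 0 < y → z + y ≤ t →
      |Real.exp (a * y) * g (y + z) * Vaux a f z y| ≤ Cg * (Cf * t) := by
    intro z y hz hy hzy
    have h1 : |Real.exp (a * y) * g (y + z) * Vaux a f z y|
        = Real.exp (a * y) * |g (y + z)| * |Vaux a f z y| := by
      rw [abs_mul, abs_mul, abs_of_pos (Real.exp_pos _)]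
    rw [h1]
    have hVt : |Vaux a f z y| ≤ Cf * t :=
      (Vaux_bd ha hCf z y hy.le).trans (by nlinarith)
    have h2 : Real.exp (a * y) * |g (y + z)| ≤ 1 * Cg :=
      mul_le_mul (exp_le_one_of ha hy.le) (hCg _) (abs_nonneg _) zero_le_one
    calc Real.exp (a * y) * |g (y + z)| * |Vaux a f z y| ≤ (1 * Cg) * (Cf * t) :=
          mul_le_mul h2 hVt (abs_nonneg _) (by positivity)
      _ = Cg * (Cf * t) := by ring
  have E1 := tri_swap t ht0 (fun z y => Real.exp (a * y) * g (y + z) * Vaux a f z y)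
      hF1meas (Cg * (Cf * t)) hF1bd
  -- Step E2 : rectangular Fubini in the inner double integral
  have E2 : (∫ y in (0:ℝ)..t, ∫ z in (0:ℝ)..(t - y),
        Real.exp (a * y) * g (y + z) * Vaux a f z y)
      = ∫ y in (0:ℝ)..t, ∫ v in (0:ℝ)..y, (Real.exp (a * y) * Real.exp (a * v)) *
          ∫ z in (0:ℝ)..(t - y), g (y + z) * f (v + z) := by
    rw [intervalIntegral.integral_of_le ht0, intervalIntegral.integral_of_le ht0]
    refine setIntegral_congr_fun measurableSet_Ioc (fun y hy => ?_)
    simp only [Set.mem_Ioc] at hy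
    have hty : (0:ℝ) ≤ t - y := by linarith [hy.2]
    have h0y : (0:ℝ) ≤ y := hy.1.le
    have step1 : (∫ z in (0:ℝ)..(t - y), Real.exp (a * y) * g (y + z) * Vaux a f z y)
        = ∫ z in (0:ℝ)..(t - y), ∫ v in (0:ℝ)..y,
            (Real.exp (a * y) * g (y + z)) * (Real.exp (a * v) * f (v + z)) := by
      refine intervalIntegral.integral_congr (fun z _ => ?_)
      rw [← Vaux_eq a f z y h0y, ← intervalIntegral.integral_const_mul]
    have step2 : (∫ z in (0:ℝ)..(t - y), ∫ v in (0:ℝ)..y,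
            (Real.exp (a * y) * g (y + z)) * (Real.exp (a * v) * f (v + z)))
        = ∫ v in (0:ℝ)..y, ∫ z in (0:ℝ)..(t - y),
            (Real.exp (a * y) * g (y + z)) * (Real.exp (a * v) * f (v + z)) := by
      have hQm : Measurable fun x : ℝ × ℝ =>
          (Real.exp (a * y) * g (y + x.1)) * (Real.exp (a * x.2) * f (x.2 + x.1)) :=
        (measurable_const.mul (hg.comp (measurable_const.add measurable_fst))).mul
          (((measurable_const.mul measurable_snd).exp).mul
            (hf.comp (measurable_snd.add measurable_fst)))
      have hQb : ∀ z v : ℝ, 0 < z → z ≤ t - y → 0 < v → v ≤ y →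
          |(Real.exp (a * y) * g (y + z)) * (Real.exp (a * v) * f (v + z))| ≤ Cg * Cf := by
        intro z v hz hzp hv hvq
        rw [abs_mul, abs_mul, abs_mul, abs_of_pos (Real.exp_pos _),
          abs_of_pos (Real.exp_pos _)]
        have h2 : Real.exp (a * y) * |g (y + z)| ≤ 1 * Cg :=
          mul_le_mul (exp_le_one_of ha h0y) (hCg _) (abs_nonneg _) zero_le_one
        have h3 : Real.exp (a * v) * |f (v + z)| ≤ 1 * Cf :=
          mul_le_mul (exp_le_one_of ha hv.le) (hCf _) (abs_nonneg _) zero_le_one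
        calc Real.exp (a * y) * |g (y + z)| * (Real.exp (a * v) * |f (v + z)|)
            ≤ (1 * Cg) * (1 * Cf) := mul_le_mul h2 h3 (by positivity) (by positivity)
          _ = Cg * Cf := by ring
      have := rect_swap (t - y) y hty h0y
        (fun z v => (Real.exp (a * y) * g (y + z)) * (Real.exp (a * v) * f (v + z)))
        (by simpa using hQm) (Cg * Cf) hQb
      simpa using this
    have step3 : ∀ v : ℝ, (∫ z in (0:ℝ)..(t - y),
            (Real.exp (a * y) * g (y + z)) * (Real.exp (a * v) * f (v + z)))
        = (Real.exp (a * y) * Real.exp (a * v)) *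
            ∫ z in (0:ℝ)..(t - y), g (y + z) * f (v + z) := by
      intro v
      rw [← intervalIntegral.integral_const_mul]
      refine intervalIntegral.integral_congr (fun z _ => ?_)
      ring
    rw [step1, step2]
    refine intervalIntegral.integral_congr (fun v _ => ?_)
    exact step3 v
  -- bound on the correlation integral
  have hCor : ∀ y ∈ Set.Ioc (0:ℝ) t, ∀ v ∈ Set.Ioc (0:ℝ) y,
      |∫ z in (0:ℝ)..(t - y), g (y + z) * f (v + z)| ≤ 2 * W := by
    intro y hy v hv
    simp only [Set.mem_Ioc] at hy hv
    have hw0 : 0 ≤ y - v := by linarith [hv.2]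
    have hFm : Measurable fun u : ℝ => g (u + (y - v)) * f u :=
      (hg.comp (measurable_id.add_const _)).mul hf
    have hFb : ∀ u, |g (u + (y - v)) * f u| ≤ Cg * Cf := fun u => by
      rw [abs_mul]; exact mul_le_mul (hCg _) (hCf _) (abs_nonneg _) hCg0
    have hint := fun b c : ℝ => bdd_intervalIntegrable hFm hFb b c
    have h1 : (∫ z in (0:ℝ)..(t - y), g (y + z) * f (v + z))
        = ∫ z in (0:ℝ)..(t - y), g (z + v + (y - v)) * f (z + v) := by
      refine intervalIntegral.integral_congr (fun z _ => ?_)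
      rw [show z + v + (y - v) = y + z by ring, show z + v = v + z by ring]
    have h2 := intervalIntegral.integral_comp_add_right (a := (0:ℝ)) (b := t - y)
      (f := fun u => g (u + (y - v)) * f u) v
    simp only [zero_add] at h2
    rw [h1, h2,
      ← intervalIntegral.integral_interval_sub_left (hint 0 (t - y + v)) (hint 0 v)]
    have hb1 := hW2 (y - v) ⟨hw0, by linarith⟩ (t - y + v) ⟨by linarith, by linarith⟩
    have hb2 := hW2 (y - v) ⟨hw0, by linarith⟩ v ⟨by linarith, by linarith⟩
    calc |(∫ u in (0:ℝ)..(t - y + v), g (u + (y - v)) * f u)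
          - ∫ u in (0:ℝ)..v, g (u + (y - v)) * f u|
        ≤ |∫ u in (0:ℝ)..(t - y + v), g (u + (y - v)) * f u|
          + |∫ u in (0:ℝ)..v, g (u + (y - v)) * f u| := abs_sub _ _
      _ ≤ W + W := add_le_add hb1 hb2
      _ = 2 * W := by ring
  -- elementary exponential integral
  have hexpint : ∀ y : ℝ, (∫ v in (0:ℝ)..y, Real.exp (a * v)) = (Real.exp (a * y) - 1) / a := by
    intro y
    have hder : ∀ v ∈ Set.uIcc (0:ℝ) y,
        HasDerivAt (fun u => Real.exp (a * u) / a) (Real.exp (a * v)) v := by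
      intro v _
      have h1 : HasDerivAt (fun u : ℝ => a * u) a v := by
        simpa using (hasDerivAt_id v).const_mul a
      have h2 := (h1.exp).div_const a
      refine h2.congr_deriv ?_
      field_simp
    rw [intervalIntegral.integral_eq_sub_of_hasDerivAt hder
      ((Real.continuous_exp.comp (continuous_const.mul continuous_id)).intervalIntegrable _ _)]
    rw [mul_zero, Real.exp_zero]
    ring
  -- the weighted exponential bound, pointwise in y
  have hinner : ∀ y ∈ Set.Ioc (0:ℝ) t,
      ‖∫ v in (0:ℝ)..y, (Real.exp (a * y) * Real.exp (a * v)) *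
          ∫ z in (0:ℝ)..(t - y), g (y + z) * f (v + z)‖
        ≤ Real.exp (a * y) * ((Real.exp (a * y) - 1) / a) * (2 * W) := by
    intro y hy
    have h0y : (0:ℝ) ≤ y := hy.1.le
    have hcalc : (∫ v in (0:ℝ)..y, (Real.exp (a * y) * Real.exp (a * v)) * (2 * W))
        = Real.exp (a * y) * ((Real.exp (a * y) - 1) / a) * (2 * W) := by
      have harr : ∀ v : ℝ, (Real.exp (a * y) * Real.exp (a * v)) * (2 * W)
          = (Real.exp (a * y) * (2 * W)) * Real.exp (a * v) := fun v => by ring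
      simp_rw [harr]
      rw [intervalIntegral.integral_const_mul, hexpint y]
      ring
    calc ‖∫ v in (0:ℝ)..y, (Real.exp (a * y) * Real.exp (a * v)) *
            ∫ z in (0:ℝ)..(t - y), g (y + z) * f (v + z)‖
        = ‖∫ v in Set.Ioc (0:ℝ) y, (Real.exp (a * y) * Real.exp (a * v)) *
            ∫ z in (0:ℝ)..(t - y), g (y + z) * f (v + z)‖ := by
          rw [intervalIntegral.integral_of_le h0y]
      _ ≤ ∫ v in Set.Ioc (0:ℝ) y, ‖(Real.exp (a * y) * Real.exp (a * v)) *
            ∫ z in (0:ℝ)..(t - y), g (y + z) * f (v + z)‖ :=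
          norm_integral_le_integral_norm _
      _ ≤ ∫ v in Set.Ioc (0:ℝ) y, (Real.exp (a * y) * Real.exp (a * v)) * (2 * W) := by
          refine integral_mono_of_nonneg (ae_of_all _ fun v => norm_nonneg _) ?_ ?_
          · exact (Continuous.integrableOn_Ioc (by fun_prop))
          · filter_upwards [ae_restrict_mem measurableSet_Ioc] with v hv
            rw [Real.norm_eq_abs, abs_mul, abs_of_pos (by positivity)]
            exact mul_le_mul_of_nonneg_left (hCor y hy v hv) (by positivity)
      _ = Real.exp (a * y) * ((Real.exp (a * y) - 1) / a) * (2 * W) := by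
          rw [← intervalIntegral.integral_of_le h0y]
          exact hcalc
  -- integrate the bound
  have houtint : (∫ y in (0:ℝ)..t, Real.exp (a * y) * ((Real.exp (a * y) - 1) / a) * (2 * W))
      = W / a ^ 2 * (Real.exp (a * t) - 1) ^ 2 := by
    have hder : ∀ y ∈ Set.uIcc (0:ℝ) t,
        HasDerivAt (fun u => W / a ^ 2 * (Real.exp (a * u) - 1) ^ 2)
          (Real.exp (a * y) * ((Real.exp (a * y) - 1) / a) * (2 * W)) y := by
      intro y _
      have h1 : HasDerivAt (fun u : ℝ => a * u) a y := by
        simpa using (hasDerivAt_id y).const_mul a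
      have h4 := ((h1.exp.sub_const 1).pow 2).const_mul (W / a ^ 2)
      refine h4.congr_deriv ?_
      field_simp
      ring
    rw [intervalIntegral.integral_eq_sub_of_hasDerivAt hder
      (Continuous.intervalIntegrable (by fun_prop) _ _)]
    rw [mul_zero, Real.exp_zero]
    ring
  have hBint : IntegrableOn
      (fun y => Real.exp (a * y) * ((Real.exp (a * y) - 1) / a) * (2 * W))
      (Set.Ioc (0:ℝ) t) volume := Continuous.integrableOn_Ioc (by fun_prop)
  -- final assembly
  rw [E0, E1, E2, abs_mul, abs_of_nonneg (sq_nonneg a)]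
  have hmain : |∫ y in (0:ℝ)..t, ∫ v in (0:ℝ)..y,
        (Real.exp (a * y) * Real.exp (a * v)) *
          ∫ z in (0:ℝ)..(t - y), g (y + z) * f (v + z)|
      ≤ W / a ^ 2 * (Real.exp (a * t) - 1) ^ 2 := by
    calc |∫ y in (0:ℝ)..t, ∫ v in (0:ℝ)..y, (Real.exp (a * y) * Real.exp (a * v)) *
            ∫ z in (0:ℝ)..(t - y), g (y + z) * f (v + z)|
        = ‖∫ y in Set.Ioc (0:ℝ) t, ∫ v in (0:ℝ)..y, (Real.exp (a * y) * Real.exp (a * v)) *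
            ∫ z in (0:ℝ)..(t - y), g (y + z) * f (v + z)‖ := by
          rw [intervalIntegral.integral_of_le ht0, Real.norm_eq_abs]
      _ ≤ ∫ y in Set.Ioc (0:ℝ) t, ‖∫ v in (0:ℝ)..y, (Real.exp (a * y) * Real.exp (a * v)) *
            ∫ z in (0:ℝ)..(t - y), g (y + z) * f (v + z)‖ :=
          norm_integral_le_integral_norm _
      _ ≤ ∫ y in Set.Ioc (0:ℝ) t,
            Real.exp (a * y) * ((Real.exp (a * y) - 1) / a) * (2 * W) := by
          refine integral_mono_of_nonneg (ae_of_all _ fun y => norm_nonneg _) hBint ?_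
          filter_upwards [ae_restrict_mem measurableSet_Ioc] with y hy
          exact hinner y hy
      _ = W / a ^ 2 * (Real.exp (a * t) - 1) ^ 2 := by
          rw [← intervalIntegral.integral_of_le ht0]
          exact houtint
  have hstep := mul_le_mul_of_nonneg_left hmain (sq_nonneg a)
  have heq : a ^ 2 * (W / a ^ 2 * (Real.exp (a * t) - 1) ^ 2)
      = W * (Real.exp (a * t) - 1) ^ 2 := by
    field_simp
  have hfin : W * (Real.exp (a * t) - 1) ^ 2 ≤ 2 * W := by
    have h01 : 0 < Real.exp (a * t) := Real.exp_pos _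
    have hle1 : Real.exp (a * t) ≤ 1 := exp_le_one_of ha ht0
    have hsq : (Real.exp (a * t) - 1) ^ 2 ≤ 1 := by nlinarith
    have := mul_le_mul_of_nonneg_left hsq hW0
    linarith
  calc a ^ 2 * |∫ y in (0:ℝ)..t, ∫ v in (0:ℝ)..y,
        (Real.exp (a * y) * Real.exp (a * v)) *
          ∫ z in (0:ℝ)..(t - y), g (y + z) * f (v + z)|
      ≤ a ^ 2 * (W / a ^ 2 * (Real.exp (a * t) - 1) ^ 2) := hstep
    _ = W * (Real.exp (a * t) - 1) ^ 2 := heq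
    _ ≤ 2 * W := hfin
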